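/- Lemma 3.6(i) (degenerate sufficient decrease, without convexity of g): Let g : H → ℝ and let x, x⁺ ∈ H be such that x⁺ minimizes the function z ↦ g(z) + (1/2)⟪Q(z − x), z − x⟫ + ⟪∇f(x), z − x⟫ over H. Then, writing h := f + g, one has 2ν · (h(x) − h(x⁺)) ≥ (ν − β) · ⟪Q(x⁺ − x), x⁺ − x⟫; i.e. h(x) − h(x⁺) ≥ (1/2)(1 − β/ν) ‖x⁺ − x‖_Q². -/

import Mathlib

open RealInnerProductSpace


set_option maxHeartbeats 1000000 in
/-- Lemma 3.6(i): degenerate sufficient decrease property, without convexity of `g`. -/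
theorem stmt_16
    {H : Type*} [NormedAddCommGroup H] [InnerProductSpace ℝ H] [CompleteSpace H]
    (Q : H →L[ℝ] H)
    (hQsym : ∀ x y : H, ⟪Q x, y⟫ = ⟪x, Q y⟫)
    (hQpos : ∀ x : H, 0 ≤ ⟪Q x, x⟫)
    (ν : ℝ) (hν : 0 < ν)
    (hνQ : ∀ w ∈ (LinearMap.ker (Q : H →ₗ[ℝ] H))ᗮ, ν * ‖w‖ ≤ ‖Q w‖)
    (β : ℝ) (hβ : 0 ≤ β)
    (f : H → ℝ) (f' : H → H)
    (hf : ∀ x : H, HasGradientAt f (f' x) x)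
    (hranf' : Set.range f' ⊆ Set.range Q)
    (hcoco : ∀ x y : H, ‖f' x - f' y‖ ^ 2 ≤ β * ⟪f' x - f' y, x - y⟫)
    (g : H → ℝ) (x xp : H)
    (hmin : ∀ z : H,
      g xp + (1 / 2) * ⟪Q (xp - x), xp - x⟫ + ⟪f' x, xp - x⟫ ≤
        g z + (1 / 2) * ⟪Q (z - x), z - x⟫ + ⟪f' x, z - x⟫) :
    (ν - β) * ⟪Q (xp - x), xp - x⟫ ≤
      2 * ν * ((f x + g x) - (f xp + g xp)) := by
  set d := xp - x with hd
  set s := ⟪Q d, d⟫ with hsdef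
  have hs : 0 ≤ s := hQpos d
  -- Step 1: from minimality at z = x
  have hg : g xp + (1 / 2) * s + ⟪f' x, d⟫ ≤ g x := by
    have := hmin x
    simpa using this
  -- orthogonal projection setup
  haveI : CompleteSpace (LinearMap.ker (Q : H →ₗ[ℝ] H)) :=
    (ContinuousLinearMap.isClosed_ker Q).completeSpace_coe
  -- Step 2: pointwise bound
  have key : ∀ t : ℝ, 0 ≤ t → ⟪f' (x + t • d) - f' x, d⟫ ≤ t * (β * s / ν) := by
    intro t ht
    set Δ := f' (x + t • d) - f' x with hΔ
    obtain ⟨a₁, ha₁⟩ := hranf' ⟨x + t • d, rfl⟩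
    obtain ⟨a₂, ha₂⟩ := hranf' ⟨x, rfl⟩
    set w := a₁ - a₂ with hw
    have hQw : Q w = Δ := by simp [hw, hΔ, map_sub, ha₁, ha₂]
    set u := w - (Submodule.orthogonalProjection (LinearMap.ker (Q : H →ₗ[ℝ] H)) w : H) with hu
    have humem : u ∈ (LinearMap.ker (Q : H →ₗ[ℝ] H))ᗮ :=
      Submodule.sub_starProjection_mem_orthogonal w
    have hQu : Q u = Δ := by
      have hk : Q ((Submodule.orthogonalProjection (LinearMap.ker (Q : H →ₗ[ℝ] H)) w : H)) = 0 :=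
        (Submodule.orthogonalProjection (LinearMap.ker (Q : H →ₗ[ℝ] H)) w).2
      rw [hu, map_sub, hk, hQw, sub_zero]
    -- Cauchy-Schwarz for Q
    have h2 : ⟪Q d, u⟫ = ⟪Q u, d⟫ := by rw [hQsym, real_inner_comm]
    have hCS : ⟪Q u, d⟫ ^ 2 ≤ ⟪Q u, u⟫ * s := by
      have hpoly : ∀ r : ℝ, 0 ≤ s * (r * r) + (2 * ⟪Q u, d⟫) * r + ⟪Q u, u⟫ := by
        intro r
        have h0 := hQpos (u + r • d)
        have expand : ⟪Q (u + r • d), u + r • d⟫ =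
            ⟪Q u, u⟫ + r * ⟪Q u, d⟫ + r * ⟪Q d, u⟫ + r * r * s := by
          rw [map_add, map_smul, inner_add_left, inner_add_right, inner_add_right,
            real_inner_smul_left, real_inner_smul_left, real_inner_smul_right,
            real_inner_smul_right]
          ring
        rw [expand, h2] at h0
        linarith
      have hdisc := discrim_le_zero hpoly
      rw [discrim] at hdisc
      nlinarith [hdisc]
    have hb : ν * ⟪Q u, u⟫ ≤ ‖Q u‖ ^ 2 := by
      have h1 : ⟪Q u, u⟫ ≤ ‖Q u‖ * ‖u‖ := real_inner_le_norm _ _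
      have h2 : ν * ‖u‖ ≤ ‖Q u‖ := hνQ u humem
      nlinarith [norm_nonneg (Q u), norm_nonneg u]
    have hco : ‖Δ‖ ^ 2 ≤ β * (t * ⟪Δ, d⟫) := by
      have := hcoco (x + t • d) x
      have hxx : x + t • d - x = t • d := by abel
      rw [hxx, inner_smul_right] at this
      exact this
    have ha : ⟪Δ, d⟫ = ⟪Q u, d⟫ := by rw [hQu]
    have hQun : ‖Q u‖ = ‖Δ‖ := by rw [hQu]
    -- combine
    rw [ha] at hco ⊢
    rw [← hQun] at hco
    have hchain : ν * (⟪Q u, d⟫ ^ 2) ≤ β * (t * ⟪Q u, d⟫) * s := by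
      nlinarith [mul_le_mul_of_nonneg_left hCS hν.le,
        mul_le_mul_of_nonneg_right hb hs, mul_le_mul_of_nonneg_right hco hs]
    by_contra hcon
    push_neg at hcon
    have ht0 : 0 ≤ t * (β * s / ν) :=
      mul_nonneg ht (div_nonneg (mul_nonneg hβ hs) hν.le)
    have ha0 : 0 < ⟪Q u, d⟫ := lt_of_le_of_lt ht0 hcon
    have hνa : t * (β * s) < ν * ⟪Q u, d⟫ := by
      have hm := mul_lt_mul_of_pos_left hcon hν
      have he : ν * (t * (β * s / ν)) = t * (β * s) := by
        field_simp
      linarith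
    nlinarith [mul_lt_mul_of_pos_right hνa ha0]
  -- Step 3: descent along the segment
  have hderiv : ∀ t : ℝ, HasDerivAt (fun r : ℝ => f (x + r • d)) ⟪f' (x + t • d), d⟫ t := by
    intro t
    have hc : HasDerivAt (fun r : ℝ => x + r • d) d t := by
      simpa using ((hasDerivAt_id t).smul_const d).const_add x
    have hF := (hf (x + t • d)).hasFDerivAt
    have := hF.comp_hasDerivAt t hc
    exact this
  set φ : ℝ → ℝ := fun t => f (x + t • d) - t * ⟪f' x, d⟫ - t ^ 2 * (β * s / ν) / 2 with hφ
  have hφderiv : ∀ t : ℝ, HasDerivAt φ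
      (⟪f' (x + t • d), d⟫ - ⟪f' x, d⟫ - t * (β * s / ν)) t := by
    intro t
    have h1 := hderiv t
    have h2 : HasDerivAt (fun r : ℝ => r * ⟪f' x, d⟫) ⟪f' x, d⟫ t := by
      simpa using (hasDerivAt_id t).mul_const ⟪f' x, d⟫
    have h3 : HasDerivAt (fun r : ℝ => r ^ 2 * (β * s / ν) / 2) (t * (β * s / ν)) t := by
      have := ((hasDerivAt_pow 2 t).mul_const (β * s / ν)).div_const 2
      exact this.congr_deriv (by rw [show (2:ℕ) - 1 = 1 from rfl]; push_cast; ring)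
    exact (h1.sub h2).sub h3
  have hmono : φ 1 ≤ φ 0 := by
    have hanti : AntitoneOn φ (Set.Icc 0 1) := by
      apply antitoneOn_of_deriv_nonpos (convex_Icc 0 1)
      · exact fun t _ => ((hφderiv t).continuousAt).continuousWithinAt
      · intro t ht
        exact ((hφderiv t).differentiableAt).differentiableWithinAt
      · intro t ht
        rw [interior_Icc] at ht
        rw [(hφderiv t).deriv]
        have := key t (le_of_lt ht.1)
        rw [inner_sub_left] at this
        linarith
    exact hanti (by simp) (by simp) (by norm_num)
  have hxpd : x + (1 : ℝ) • d = xp := by simp [hd]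
  have hf1 : f xp ≤ f x + ⟪f' x, d⟫ + (β * s / ν) / 2 := by
    have := hmono
    simp only [hφ, hxpd] at this
    simp only [one_pow, one_mul, zero_mul, zero_smul, add_zero] at this
    norm_num at this
    linarith
  -- combine everything
  have hνs : 2 * ν * ((β * s / ν) / 2) = β * s := by
    field_simp
  have h1 : f x + g x - (f xp + g xp) ≥ (1 / 2) * s - (β * s / ν) / 2 := by
    linarith
  nlinarith [h1, hνs, hν, hs]
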